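/- For every positive integer k there exists a claw-free graph G of order n = k² + 3k + 3 such that: δ(G) = k + 2; α(G) = k + 1 (hence every nonempty independent set I of G satisfies |I| ≤ δ_G(I) − 1); σ_{k+1}(G) = n − 1; and every 2-factor of G has at least k + 1 cycles (so G has no 2-factor with at most k cycles). Consequently, the degree sum condition σ_{k+1}(G) ≥ n in the main theorem cannot be weakened to σ_{k+1}(G) ≥ n − 1. Such a graph is obtained from a complete graph H_0 on vertices v_1, …, v_{k+3} and k pairwise disjoint copies H_1, …, H_k of K_{k+2} by joining every vertex of H_i to v_i for each i ∈ {1, …, k}. -/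

import Mathlib

/-- A graph is claw-free if it contains no induced subgraph isomorphic to `K_{1,3}`. -/
def ClawFree {V : Type*} (G : SimpleGraph V) : Prop :=
  ¬ ∃ v a b c : V, a ≠ b ∧ a ≠ c ∧ b ≠ c ∧
    G.Adj v a ∧ G.Adj v b ∧ G.Adj v c ∧ ¬ G.Adj a b ∧ ¬ G.Adj a c ∧ ¬ G.Adj b c

/-- A finset of vertices is an independent set of `G` if no two of its vertices
are adjacent. -/
def IsIndepFinset {V : Type*} (G : SimpleGraph V) (I : Finset V) : Prop :=
  ∀ a ∈ I, ∀ b ∈ I, ¬ G.Adj a b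

/-- A 2-factor of `G` is a 2-regular spanning subgraph of `G`. -/
def IsTwoFactor {V : Type*} (G : SimpleGraph V) (F : G.Subgraph) : Prop :=
  F.IsSpanning ∧ ∀ v : V, (F.neighborSet v).ncard = 2

/-- The vertex set of the graph `G_k`: the complete graph `H_0` on `k + 3` vertices
`v_1, …, v_{k+3}` (given by `Sum.inl`), together with `k` disjoint copies
`H_1, …, H_k` of `K_{k+2}` (the copy `H_i` consists of the vertices `Sum.inr (i, a)`). -/
abbrev GkVertex (k : ℕ) : Type := Fin (k + 3) ⊕ Fin k × Fin (k + 2)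

/-- The base relation for `G_k`: all pairs inside `H_0` are related, two vertices of the
copies are related iff they lie in the same copy `H_i`, and `v_i ∈ H_0` is related to
every vertex of the copy `H_i`. -/
def GkRel (k : ℕ) : GkVertex k → GkVertex k → Prop
  | Sum.inl _, Sum.inl _ => True
  | Sum.inr ⟨i, _⟩, Sum.inr ⟨j, _⟩ => i = j
  | Sum.inl i, Sum.inr ⟨j, _⟩ => (i : ℕ) = (j : ℕ)
  | Sum.inr _, Sum.inl _ => False

/-- The graph `G_k`, obtained from a complete graph `H_0` on vertices `v_1, …, v_{k+3}`
and `k` pairwise disjoint copies `H_1, …, H_k` of `K_{k+2}` by joining every vertex of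
`H_i` to `v_i` for each `i ∈ {1, …, k}`. -/
def Gk (k : ℕ) : SimpleGraph (GkVertex k) := SimpleGraph.fromRel (GkRel k)

/-- **Sharpness of the degree sum condition.**  For every positive integer `k`, the
claw-free graph `G_k` has order `n = k² + 3k + 3`, minimum degree `δ(G_k) = k + 2`,
independence number `α(G_k) = k + 1` (hence every nonempty independent set `I`
satisfies `|I| ≤ δ(I) - 1`), degree sum condition `σ_{k+1}(G_k) = n - 1`, and yet
every 2-factor of `G_k` has at least `k + 1` cycles; so the hypothesis
`σ_{k+1}(G) ≥ n` in the main theorem cannot be weakened to `σ_{k+1}(G) ≥ n - 1`. -/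
lemma adj_ll {k : ℕ} (i j : Fin (k+3)) : (Gk k).Adj (Sum.inl i) (Sum.inl j) ↔ i ≠ j := by
  simp [Gk, SimpleGraph.fromRel_adj, GkRel]

lemma adj_lr {k : ℕ} (i : Fin (k+3)) (j : Fin k) (b : Fin (k+2)) :
    (Gk k).Adj (Sum.inl i) (Sum.inr (j, b)) ↔ (i : ℕ) = (j : ℕ) := by
  simp [Gk, SimpleGraph.fromRel_adj, GkRel]

lemma adj_rr {k : ℕ} (i j : Fin k) (a b : Fin (k+2)) :
    (Gk k).Adj (Sum.inr (i, a)) (Sum.inr (j, b)) ↔ i = j ∧ (a ≠ b ∨ i ≠ j) := by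
  simp [Gk, SimpleGraph.fromRel_adj, GkRel]
  aesop

lemma adj_rl {k : ℕ} (i : Fin (k+3)) (j : Fin k) (b : Fin (k+2)) :
    (Gk k).Adj (Sum.inr (j, b)) (Sum.inl i) ↔ (i : ℕ) = (j : ℕ) := by
  rw [SimpleGraph.adj_comm]; exact adj_lr i j b

def vi {k : ℕ} (i : Fin k) : Fin (k + 3) ⊕ Fin k × Fin (k + 2) := Sum.inl ⟨i, by omega⟩

lemma nbr_inr {k : ℕ} (i : Fin k) (a : Fin (k+2)) :
    (Gk k).neighborSet (Sum.inr (i,a)) = insert (vi i) ((fun b => (Sum.inr (i,b) : Fin (k+3) ⊕ Fin k × Fin (k+2))) '' {a}ᶜ) := by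
  ext x
  rcases x with j | ⟨j, b⟩
  · simp only [SimpleGraph.mem_neighborSet, adj_rl j i a, Set.mem_insert_iff, vi, Set.mem_image]
    constructor
    · intro h; left; exact congrArg Sum.inl (Fin.ext h)
    · rintro (h | ⟨b', _, h⟩)
      · cases h; simp
      · simp at h
  · rw [SimpleGraph.mem_neighborSet, adj_rr]
    simp only [Set.mem_insert_iff, vi, Set.mem_image, Set.mem_compl_iff, Set.mem_singleton_iff]
    constructor
    · rintro ⟨rfl, h⟩; right; exact ⟨b, by tauto, rfl⟩
    · rintro (h | ⟨b', hb', h⟩)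
      · simp at h
      · cases h; exact ⟨rfl, Or.inl (Ne.symm hb')⟩

lemma ncard_nbr_inr {k : ℕ} (i : Fin k) (a : Fin (k+2)) :
    ((Gk k).neighborSet (Sum.inr (i,a))).ncard = k + 2 := by
  rw [nbr_inr]
  rw [Set.ncard_insert_of_notMem (by simp [vi]) (Set.toFinite _)]
  rw [Set.ncard_image_of_injective _ (fun x y h => by simpa using h)]
  have : ({a}ᶜ : Set (Fin (k+2))).ncard = k + 1 := by
    rw [Set.ncard_eq_toFinset_card']
    simp [Finset.card_compl]
  omega

lemma nbr_inl_ge {k : ℕ} (i : Fin (k+3)) (h : k ≤ (i : ℕ)) :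
    (Gk k).neighborSet (Sum.inl i) = Sum.inl '' {i}ᶜ := by
  ext x
  rcases x with j | ⟨j, b⟩
  · simp [adj_ll, eq_comm, ne_comm]
  · simp only [SimpleGraph.mem_neighborSet, adj_lr, Set.mem_image]
    constructor
    · intro hh; omega
    · rintro ⟨y, _, h⟩; simp at h

lemma ncard_nbr_inl_ge {k : ℕ} (i : Fin (k+3)) (h : k ≤ (i : ℕ)) :
    ((Gk k).neighborSet (Sum.inl i)).ncard = k + 2 := by
  rw [nbr_inl_ge i h, Set.ncard_image_of_injective _ Sum.inl_injective,
    Set.ncard_eq_toFinset_card']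
  simp [Finset.card_compl]

lemma ncard_nbr_inl_le {k : ℕ} (i : Fin (k+3)) :
    k + 2 ≤ ((Gk k).neighborSet (Sum.inl i)).ncard := by
  have hsub : Sum.inl '' {i}ᶜ ⊆ (Gk k).neighborSet (Sum.inl i) := by
    rintro x ⟨j, hj, rfl⟩
    exact (adj_ll i j).2 (Ne.symm hj)
  calc k + 2 = (Sum.inl '' {i}ᶜ : Set _).ncard := by
        rw [Set.ncard_image_of_injective _ Sum.inl_injective, Set.ncard_eq_toFinset_card']
        simp [Finset.card_compl]
    _ ≤ _ := Set.ncard_le_ncard hsub (Set.toFinite _)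

lemma gk_clawfree (k : ℕ) : ClawFree (Gk k) := by
  rintro ⟨v, a, b, c, hab, hac, hbc, hva, hvb, hvc, nab, nac, nbc⟩
  rcases v with i | ⟨i, x⟩ <;> rcases a with j1 | ⟨j1, y1⟩ <;> rcases b with j2 | ⟨j2, y2⟩ <;>
      rcases c with j3 | ⟨j3, y3⟩ <;>
    simp_all [adj_ll, adj_lr, adj_rl, adj_rr, Fin.ext_iff, Prod.ext_iff]

lemma indep_card_le (k : ℕ) (I : Finset (Fin (k+3) ⊕ Fin k × Fin (k+2)))
    (hI : IsIndepFinset (Gk k) I) : I.card ≤ k + 1 := by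
  have : I.card ≤ (Finset.univ : Finset (Option (Fin k))).card := by
    apply Finset.card_le_card_of_injOn (Sum.elim (fun _ => none) (fun p => some p.1))
      (fun _ _ => Finset.mem_univ _)
    intro a ha b hb hfab
    by_contra hne
    rcases a with j1 | ⟨j1, y1⟩ <;> rcases b with j2 | ⟨j2, y2⟩ <;> simp_all
    · exact hI _ ha _ hb ((adj_ll j1 j2).2 (by simpa using hne))
    · rcases hfab with rfl
      exact hI _ ha _ hb ((adj_rr j1 j1 y1 y2).2 ⟨rfl, Or.inl (by simpa using hne)⟩)
  simpa using this

def bigI (k : ℕ) : Finset (Fin (k+3) ⊕ Fin k × Fin (k+2)) :=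
  insert (Sum.inl ⟨k+2, by omega⟩) ((Finset.univ : Finset (Fin k)).image (fun i => Sum.inr (i, 0)))

lemma bigI_indep (k : ℕ) : IsIndepFinset (Gk k) (bigI k) := by
  intro a ha b hb hadj
  simp only [bigI, Finset.mem_insert, Finset.mem_image, Finset.mem_univ, true_and] at ha hb
  rcases ha with rfl | ⟨i, rfl⟩ <;> rcases hb with rfl | ⟨j, rfl⟩
  · exact (Gk k).loopless.irrefl _ hadj
  · have := (adj_lr _ j 0).1 hadj; simp at this; omega
  · have := (adj_rl _ i 0).1 hadj; simp at this; omega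
  · have := (adj_rr i j 0 0).1 hadj; tauto

lemma bigI_card (k : ℕ) : (bigI k).card = k + 1 := by
  rw [bigI, Finset.card_insert_of_notMem (by simp), Finset.card_image_of_injective _
    (fun x y h => by simpa using h)]
  simp

lemma bigI_sum (k : ℕ) :
    ∑ v ∈ bigI k, ((Gk k).neighborSet v).ncard = k ^ 2 + 3 * k + 2 := by
  rw [bigI, Finset.sum_insert (by simp), Finset.sum_image (fun x _ y _ h => by simpa using h)]
  rw [ncard_nbr_inl_ge _ (by simp)]
  simp only [ncard_nbr_inr, Finset.sum_const, Finset.card_univ, Fintype.card_fin, smul_eq_mul]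
  ring

def copyA (k : ℕ) (i : Fin k) : Set (Fin (k+3) ⊕ Fin k × Fin (k+2)) :=
  Set.range (fun b => Sum.inr (i, b))

lemma reach_closed {V : Type*} {G : SimpleGraph V} (F : G.Subgraph) (C : Set V)
    (hC : ∀ x ∈ C, ∀ y, F.Adj x y → y ∈ C) {u w : F.verts}
    (h : F.coe.Reachable u w) (hu : ↑u ∈ C) : ↑w ∈ C := by
  obtain ⟨p⟩ := h
  induction p with
  | nil => exact hu
  | cons h p ih => exact ih (hC _ hu _ (by exact h))

lemma key_closed {k : ℕ} (F : (Gk k).Subgraph) (hsp : F.IsSpanning)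
    (hdeg : ∀ v, (F.neighborSet v).ncard = 2) (i : Fin k) :
    ∃ C : Set (Fin (k+3) ⊕ Fin k × Fin (k+2)),
      (∀ x ∈ C, ∀ y, F.Adj x y → y ∈ C) ∧ Sum.inr (i, 0) ∈ C ∧
      C ⊆ insert (vi i) (copyA k i) := by
  classical
  set S : Set (Fin (k+3) ⊕ Fin k × Fin (k+2)) := insert (vi i) (copyA k i) with hS
  have hNsub : ∀ x : Fin (k+2), F.neighborSet (Sum.inr (i,x)) ⊆ S := by
    intro x
    refine (F.neighborSet_subset _).trans ?_
    rw [nbr_inr]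
    apply Set.insert_subset_insert
    rintro y ⟨b, _, rfl⟩; exact ⟨b, rfl⟩
  let G' : SimpleGraph (Fin (k+2)) :=
    { Adj := fun x y => F.Adj (Sum.inr (i,x)) (Sum.inr (i,y))
      symm := ⟨fun x y h => h.symm⟩
      loopless := ⟨fun x h => (Gk k).loopless.irrefl _ (F.adj_sub h)⟩ }
  have hviA : vi i ∉ copyA k i := by rintro ⟨b, h⟩; simp [vi] at h
  have hsplit : ∀ x : Fin (k+2),
      (G'.neighborSet x).ncard + (if F.Adj (Sum.inr (i,x)) (vi i) then 1 else 0) = 2 := by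
    intro x
    set N := F.neighborSet (Sum.inr (i,x)) with hN
    have h1 : N ∩ copyA k i = (fun b => (Sum.inr (i,b) : Fin (k+3) ⊕ Fin k × Fin (k+2))) ''
        (G'.neighborSet x) := by
      ext y
      constructor
      · rintro ⟨hy, b, rfl⟩; exact ⟨b, hy, rfl⟩
      · rintro ⟨b, hb, rfl⟩; exact ⟨hb, b, rfl⟩
    have h2 : N \ copyA k i = if F.Adj (Sum.inr (i,x)) (vi i) then {vi i} else ∅ := by
      ext y
      constructor
      · rintro ⟨hy, hy2⟩
        have : y ∈ S := hNsub x hy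
        rcases this with rfl | h
        · have hadj : F.Adj (Sum.inr (i,x)) (vi i) := hy
          simp [hadj]
        · exact absurd h hy2
      · intro hy
        split_ifs at hy with hA
        · rcases hy with rfl; exact ⟨hA, hviA⟩
        · simp at hy
    have := Set.ncard_inter_add_ncard_diff_eq_ncard N (copyA k i) (Set.toFinite _)
    rw [h1, h2, Set.ncard_image_of_injective _ (fun a b h => by simpa using h), hdeg] at this
    by_cases hA : F.Adj (Sum.inr (i,x)) (vi i)
    · simp only [if_pos hA, Set.ncard_singleton] at this ⊢
      omega
    · simp only [if_neg hA, Set.ncard_empty] at this ⊢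
      omega
  have hsum : ∑ x : Fin (k+2), (G'.neighborSet x).ncard +
      ∑ x : Fin (k+2), (if F.Adj (Sum.inr (i,x)) (vi i) then 1 else 0) = 2 * (k + 2) := by
    rw [← Finset.sum_add_distrib]
    simp [hsplit, mul_comm]
  have hdegeq : ∀ x : Fin (k+2), (G'.neighborSet x).ncard = G'.degree x := by
    intro x
    rw [Set.ncard_eq_toFinset_card']
    congr 1
  have heven1 : Even (∑ x : Fin (k+2), (G'.neighborSet x).ncard) := by
    simp only [hdegeq]
    rw [SimpleGraph.sum_degrees_eq_twice_card_edges]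
    exact even_two_mul _
  set T : Finset (Fin (k+2)) := Finset.univ.filter (fun x => F.Adj (Sum.inr (i,x)) (vi i)) with hT
  have hTsum : ∑ x : Fin (k+2), (if F.Adj (Sum.inr (i,x)) (vi i) then 1 else 0) = T.card := by
    rw [hT, Finset.card_filter]
  have hTeven : Even T.card := by
    rcases heven1 with ⟨m, hm⟩
    rw [hm, hTsum] at hsum
    exact ⟨k + 2 - m, by omega⟩
  have hTle : T.card ≤ 2 := by
    have hsub : (fun b => (Sum.inr (i,b) : Fin (k+3) ⊕ Fin k × Fin (k+2))) '' ↑T ⊆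
        F.neighborSet (vi i) := by
      rintro y ⟨b, hb, rfl⟩
      rw [hT] at hb
      simp only [Finset.coe_filter, Set.mem_setOf_eq] at hb
      exact hb.2.symm
    have := Set.ncard_le_ncard hsub (Set.toFinite _)
    rwa [Set.ncard_image_of_injective _ (fun a b h => by simpa using h), Set.ncard_coe_finset,
      hdeg] at this
  have hT02 : T.card = 0 ∨ T.card = 2 := by
    rcases hTeven with ⟨m, hm⟩
    omega
  rcases hT02 with hT0 | hT2
  · -- t = 0 : C = copyA
    refine ⟨copyA k i, ?_, ⟨0, rfl⟩, Set.subset_insert _ _⟩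
    rintro x ⟨b, rfl⟩ y hy
    have hyS : y ∈ S := hNsub b hy
    rcases hyS with rfl | h
    · exfalso
      have : b ∈ T := by rw [hT]; simp [hy]
      rw [Finset.card_eq_zero] at hT0
      simp [hT0] at this
    · exact h
  · -- t = 2 : C = S
    have hvnb : F.neighborSet (vi i) ⊆ copyA k i := by
      have hsub : (fun b => (Sum.inr (i,b) : Fin (k+3) ⊕ Fin k × Fin (k+2))) '' ↑T ⊆
          F.neighborSet (vi i) := by
        rintro y ⟨b, hb, rfl⟩
        rw [hT] at hb
        simp only [Finset.coe_filter, Set.mem_setOf_eq] at hb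
        exact hb.2.symm
      have heq : (fun b => (Sum.inr (i,b) : Fin (k+3) ⊕ Fin k × Fin (k+2))) '' ↑T =
          F.neighborSet (vi i) := by
        apply Set.eq_of_subset_of_ncard_le hsub _ (Set.toFinite _)
        rw [Set.ncard_image_of_injective _ (fun a b h => by simpa using h),
          Set.ncard_coe_finset, hdeg, hT2]
      rw [← heq]
      rintro y ⟨b, _, rfl⟩
      exact ⟨b, rfl⟩
    refine ⟨S, ?_, Set.mem_insert_of_mem _ ⟨0, rfl⟩, le_refl _⟩
    rintro x (rfl | ⟨b, rfl⟩) y hy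
    · exact Set.mem_insert_of_mem _ (hvnb hy)
    · exact hNsub b hy

lemma mem_S_inr {k : ℕ} {i j : Fin k} {b : Fin (k+2)}
    (h : Sum.inr (j, b) ∈ insert (vi i) (copyA k i)) : i = j := by
  rcases h with h | ⟨b', h⟩
  · simp [vi] at h
  · simpa using (congrArg (Sum.elim (fun _ => i) Prod.fst) h)

lemma not_mem_S_inl {k : ℕ} (i : Fin k) :
    (Sum.inl ⟨k+2, by omega⟩ : Fin (k+3) ⊕ Fin k × Fin (k+2)) ∉ insert (vi i) (copyA k i) := by
  rintro (h | ⟨b', h⟩)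
  · simp only [vi, Sum.inl.injEq] at h
    have := congrArg Fin.val h
    simp at this
    omega
  · simp at h

lemma two_factor_comps {k : ℕ} (F : (Gk k).Subgraph) (h2f : IsTwoFactor (Gk k) F) :
    k + 1 ≤ Nat.card F.coe.ConnectedComponent := by
  classical
  obtain ⟨hsp, hdeg⟩ := h2f
  choose C hclo hmem hsub using fun i : Fin k => key_closed F hsp hdeg i
  have hreach : ∀ (i : Fin k) (y : Fin (k+3) ⊕ Fin k × Fin (k+2)),
      F.coe.connectedComponentMk ⟨Sum.inr (i,0), hsp _⟩ =
        F.coe.connectedComponentMk ⟨y, hsp _⟩ → y ∈ insert (vi i) (copyA k i) := by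
    intro i y h
    exact hsub i (reach_closed F (C i) (hclo i)
      (SimpleGraph.ConnectedComponent.exact h) (hmem i))
  set g : Fin (k+1) → F.coe.ConnectedComponent := fun j =>
    if h : (j : ℕ) < k then F.coe.connectedComponentMk ⟨Sum.inr (⟨j, h⟩, 0), hsp _⟩
    else F.coe.connectedComponentMk ⟨Sum.inl ⟨k+2, by omega⟩, hsp _⟩ with hg
  have hginj : Function.Injective g := by
    intro j1 j2 heq
    rw [hg] at heq
    simp only at heq
    split_ifs at heq with h1 h2 h2
    · have := mem_S_inr (hreach _ _ heq)
      have := congrArg Fin.val this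
      simp at this
      omega
    · exact absurd (not_mem_S_inl _ (hreach _ _ heq)) (fun h => h)
    · exact absurd (not_mem_S_inl _ (hreach _ _ heq.symm)) (fun h => h)
    · omega
  calc k + 1 = Nat.card (Fin (k+1)) := by simp
    _ ≤ _ := Nat.card_le_card_of_injective g hginj



theorem sigma_condition_sharp (k : ℕ) (hk : 1 ≤ k) :
    -- `G_k` is claw-free
    ClawFree (Gk k) ∧
    -- `G_k` has order `n = k² + 3k + 3`
    Fintype.card (GkVertex k) = k ^ 2 + 3 * k + 3 ∧
    -- `δ(G_k) = k + 2`
    (∀ v : GkVertex k, k + 2 ≤ ((Gk k).neighborSet v).ncard) ∧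
    (∃ v : GkVertex k, ((Gk k).neighborSet v).ncard = k + 2) ∧
    -- `α(G_k) = k + 1`
    (∀ I : Finset (GkVertex k), IsIndepFinset (Gk k) I → I.card ≤ k + 1) ∧
    (∃ I : Finset (GkVertex k), IsIndepFinset (Gk k) I ∧ I.card = k + 1) ∧
    -- hence every nonempty independent set `I` satisfies `|I| ≤ δ(I) - 1`
    (∀ I : Finset (GkVertex k), IsIndepFinset (Gk k) I → I.Nonempty →
      ∀ v ∈ I, I.card ≤ ((Gk k).neighborSet v).ncard - 1) ∧
    -- `σ_{k+1}(G_k) = n - 1`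
    (∀ I : Finset (GkVertex k), IsIndepFinset (Gk k) I → I.card = k + 1 →
      k ^ 2 + 3 * k + 2 ≤ ∑ v ∈ I, ((Gk k).neighborSet v).ncard) ∧
    (∃ I : Finset (GkVertex k), IsIndepFinset (Gk k) I ∧ I.card = k + 1 ∧
      ∑ v ∈ I, ((Gk k).neighborSet v).ncard = k ^ 2 + 3 * k + 2) ∧
    -- every 2-factor of `G_k` has at least `k + 1` cycles
    ∀ F : (Gk k).Subgraph, IsTwoFactor (Gk k) F →
      k + 1 ≤ Nat.card F.coe.ConnectedComponent := by
  have hmin : ∀ v : Fin (k+3) ⊕ Fin k × Fin (k+2), k + 2 ≤ ((Gk k).neighborSet v).ncard := by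
    rintro (i | ⟨i, a⟩)
    · exact ncard_nbr_inl_le i
    · exact (ncard_nbr_inr i a).ge
  refine ⟨gk_clawfree k, ?_, hmin, ?_, indep_card_le k, ⟨bigI k, bigI_indep k, bigI_card k⟩,
    ?_, ?_, ⟨bigI k, bigI_indep k, bigI_card k, bigI_sum k⟩, two_factor_comps⟩
  · simp
    ring
  · exact ⟨Sum.inl ⟨k+2, by omega⟩, ncard_nbr_inl_ge _ (by simp)⟩
  · intro I hI _ v hv
    have h1 := indep_card_le k I hI
    have h2 := hmin v
    omega
  · intro I hI hcard
    calc k ^ 2 + 3 * k + 2 = I.card * (k + 2) := by rw [hcard]; ring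
      _ ≤ ∑ v ∈ I, ((Gk k).neighborSet v).ncard := by
        have := Finset.card_nsmul_le_sum I (fun v => ((Gk k).neighborSet v).ncard) (k+2)
          (fun x _ => hmin x)
        simpa using this
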